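/- Let F : ℝ^n ⇉ ℝ^n have nonempty compact values and closed graph, satisfy the linear growth condition ‖F(x)‖ ≤ A + B|x|, and satisfy the Weak Componentwise Monotonicity condition. Then for every x_0 ∈ ℝ^n and T > 0 the differential inclusion ẋ(t) ∈ F(x(t)), x(0) = x_0, has a solution on [0, T], i.e., there exists a Lipschitz function x : [0, T] → ℝ^n with x(0) = x_0 and ẋ(t) ∈ F(x(t)) for almost every t ∈ [0, T]. Moreover, a solution exists with each coordinate x_j monotone on [0, T]. -/

import Mathlib

open MeasureTheory Filter Set Topology intervalIntegral

namespace WCMaux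

variable {n : ℕ}

noncomputable def euler (F : EuclideanSpace ℝ (Fin n) → Set (EuclideanSpace ℝ (Fin n)))
    (hne : ∀ x, (F x).Nonempty)
    (hWCM : ∀ x y, ∀ v ∈ F x, ∃ w ∈ F y, ∀ j : Fin n, 0 ≤ (x j - y j) * (v j - w j))
    (x₀ : EuclideanSpace ℝ (Fin n)) (h : ℝ) :
    ℕ → {pv : EuclideanSpace ℝ (Fin n) × EuclideanSpace ℝ (Fin n) // pv.2 ∈ F pv.1}
  | 0 => ⟨(x₀, (hne x₀).choose), (hne x₀).choose_spec⟩
  | (k+1) =>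
    let s := euler F hne hWCM x₀ h k
    ⟨(s.1.1 + h • s.1.2,
      (hWCM s.1.1 (s.1.1 + h • s.1.2) s.1.2 s.2).choose),
      (hWCM s.1.1 (s.1.1 + h • s.1.2) s.1.2 s.2).choose_spec.1⟩

variable {F : EuclideanSpace ℝ (Fin n) → Set (EuclideanSpace ℝ (Fin n))}
    {hne : ∀ x, (F x).Nonempty}
    {hWCM : ∀ x y, ∀ v ∈ F x, ∃ w ∈ F y, ∀ j : Fin n, 0 ≤ (x j - y j) * (v j - w j)}
    {x₀ : EuclideanSpace ℝ (Fin n)} {h : ℝ}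

noncomputable def eP (F : EuclideanSpace ℝ (Fin n) → Set (EuclideanSpace ℝ (Fin n)))
    (hne : ∀ x, (F x).Nonempty)
    (hWCM : ∀ x y, ∀ v ∈ F x, ∃ w ∈ F y, ∀ j : Fin n, 0 ≤ (x j - y j) * (v j - w j))
    (x₀ : EuclideanSpace ℝ (Fin n)) (h : ℝ) (k : ℕ) : EuclideanSpace ℝ (Fin n) :=
  (euler F hne hWCM x₀ h k).1.1

noncomputable def eV (F : EuclideanSpace ℝ (Fin n) → Set (EuclideanSpace ℝ (Fin n)))
    (hne : ∀ x, (F x).Nonempty)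
    (hWCM : ∀ x y, ∀ v ∈ F x, ∃ w ∈ F y, ∀ j : Fin n, 0 ≤ (x j - y j) * (v j - w j))
    (x₀ : EuclideanSpace ℝ (Fin n)) (h : ℝ) (k : ℕ) : EuclideanSpace ℝ (Fin n) :=
  (euler F hne hWCM x₀ h k).1.2

lemma eP_zero : eP F hne hWCM x₀ h 0 = x₀ := rfl

lemma eP_succ (k : ℕ) :
    eP F hne hWCM x₀ h (k+1) = eP F hne hWCM x₀ h k + h • eV F hne hWCM x₀ h k := rfl

lemma eV_mem (k : ℕ) : eV F hne hWCM x₀ h k ∈ F (eP F hne hWCM x₀ h k) :=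
  (euler F hne hWCM x₀ h k).2

lemma eV_sign (k : ℕ) (j : Fin n) :
    0 ≤ (eP F hne hWCM x₀ h k j - eP F hne hWCM x₀ h (k+1) j) *
      (eV F hne hWCM x₀ h k j - eV F hne hWCM x₀ h (k+1) j) :=
  (hWCM (eP F hne hWCM x₀ h k) (eP F hne hWCM x₀ h k + h • eV F hne hWCM x₀ h k)
    (eV F hne hWCM x₀ h k) (eV_mem k)).choose_spec.2 j

lemma eV_sq (hh : 0 < h) (k : ℕ) (j : Fin n) :
    eV F hne hWCM x₀ h k j * eV F hne hWCM x₀ h k j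
      ≤ eV F hne hWCM x₀ h k j * eV F hne hWCM x₀ h (k+1) j := by
  have H := eV_sign (F := F) (hne := hne) (hWCM := hWCM) (x₀ := x₀) (h := h) k j
  rw [eP_succ] at H
  have hco : (eP F hne hWCM x₀ h k + h • eV F hne hWCM x₀ h k) j
      = eP F hne hWCM x₀ h k j + h * eV F hne hWCM x₀ h k j := rfl
  rw [hco] at H
  nlinarith [H]

lemma signseq {a : ℕ → ℝ} (H : ∀ k, a k * a k ≤ a k * a (k+1)) :
    (Monotone a ∧ ∀ k, 0 ≤ a k) ∨ (Antitone a ∧ ∀ k, a k ≤ 0) := by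
  have step_pos : ∀ k, 0 < a k → a k ≤ a (k+1) := by
    intro k hk; nlinarith [H k]
  have step_neg : ∀ k, a k < 0 → a (k+1) ≤ a k := by
    intro k hk; nlinarith [H k]
  by_cases hpos : ∃ k, 0 < a k
  · obtain ⟨k0, hk0⟩ := hpos
    have pos_stays : ∀ m, k0 ≤ m → 0 < a m := by
      intro m hm
      induction m with
      | zero => simpa [Nat.le_zero.1 hm] using hk0
      | succ m ih =>
        rcases Nat.lt_or_ge k0 (m+1) with h1 | h1
        · have := ih (Nat.lt_succ_iff.1 h1)
          calc (0:ℝ) < a m := this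
            _ ≤ a (m+1) := step_pos m this
        · have : k0 = m + 1 := le_antisymm hm h1
          simpa [← this] using hk0
    have neg_stays : ∀ k m, a k < 0 → k ≤ m → a m < 0 := by
      intro k m hk hkm
      induction m with
      | zero => simpa [Nat.le_zero.1 hkm] using hk
      | succ m ih =>
        rcases Nat.lt_or_ge k (m+1) with h1 | h1
        · have := ih (Nat.lt_succ_iff.1 h1)
          calc a (m+1) ≤ a m := step_neg m this
            _ < 0 := this
        · have : k = m + 1 := le_antisymm hkm h1
          simpa [← this] using hk
    have allnonneg : ∀ m, 0 ≤ a m := by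
      intro m
      by_contra hcon
      push_neg at hcon
      rcases Nat.le_total m k0 with hm | hm
      · exact absurd (neg_stays m k0 hcon hm) (by linarith)
      · exact absurd (pos_stays m hm) (by linarith [neg_stays m m hcon le_rfl])
    left
    refine ⟨monotone_nat_of_le_succ (fun k => ?_), allnonneg⟩
    rcases eq_or_lt_of_le (allnonneg k) with h0 | h0
    · rw [← h0]; exact allnonneg (k+1)
    · exact step_pos k h0
  · push_neg at hpos
    right
    refine ⟨antitone_nat_of_succ_le (fun k => ?_), hpos⟩
    rcases eq_or_lt_of_le (hpos k) with h0 | h0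
    · rw [h0]; exact hpos (k+1)
    · exact step_neg k h0

lemma growth_bound {n : ℕ} {x₀ : EuclideanSpace ℝ (Fin n)} {h A B : ℝ}
    (hA : 0 ≤ A) (hB : 0 ≤ B) (hh : 0 ≤ h)
    (P V : ℕ → EuclideanSpace ℝ (Fin n))
    (hP0 : P 0 = x₀)
    (hPs : ∀ k, P (k+1) = P k + h • V k)
    (hVb : ∀ k, ‖V k‖ ≤ A + B * ‖P k‖) :
    ∀ k, ‖P k‖ ≤ (‖x₀‖ + A * (k*h)) * Real.exp (B*(k*h)) := by
  intro k
  induction k with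
  | zero => simp [hP0]
  | succ k ih =>
    have h1 : ‖P (k+1)‖ ≤ ‖P k‖ + h * ‖V k‖ := by
      rw [hPs]
      calc ‖P k + h • V k‖ ≤ ‖P k‖ + ‖h • V k‖ := norm_add_le _ _
        _ = ‖P k‖ + |h| * ‖V k‖ := by rw [norm_smul, Real.norm_eq_abs]
        _ = ‖P k‖ + h * ‖V k‖ := by rw [abs_of_nonneg hh]
    have h2 : ‖P (k+1)‖ ≤ (1 + h*B) * ‖P k‖ + h * A := by
      have := hVb k
      have hPk : 0 ≤ ‖P k‖ := norm_nonneg _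
      nlinarith
    have e1 : (1:ℝ) ≤ Real.exp (B*(k*h)) := Real.one_le_exp (by positivity)
    have e3 : 1 + h*B ≤ Real.exp (B*h) := by
      have := Real.add_one_le_exp (B*h); linarith
    have e2 : Real.exp (B*(((k:ℕ)+1:ℕ)*h)) = Real.exp (B*(k*h)) * Real.exp (B*h) := by
      rw [← Real.exp_add]; congr 1; push_cast; ring
    have hx0 : 0 ≤ ‖x₀‖ := norm_nonneg _
    have hexp : 0 < Real.exp (B*(k*h)) := Real.exp_pos _
    have key : (1 + h*B) * ((‖x₀‖ + A * (k*h)) * Real.exp (B*(k*h))) + h * A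
        ≤ (‖x₀‖ + A * ((k+1:ℕ)*h)) * Real.exp (B*((k+1:ℕ)*h)) := by
      rw [e2]
      have hkh : 0 ≤ (k:ℝ)*h := by positivity
      have hfac : 0 ≤ (‖x₀‖ + A * ((k:ℝ)*h)) * Real.exp (B*(k*h)) := by positivity
      have t1 : (1 + h*B) * ((‖x₀‖ + A * ((k:ℝ)*h)) * Real.exp (B*(k*h)))
          ≤ Real.exp (B*h) * ((‖x₀‖ + A * ((k:ℝ)*h)) * Real.exp (B*(k*h))) :=
        mul_le_mul_of_nonneg_right e3 hfac
      have hee : (1:ℝ) ≤ Real.exp (B*(k*h)) * Real.exp (B*h) := by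
        have := Real.one_le_exp (show (0:ℝ) ≤ B*h by positivity)
        nlinarith
      have t2 : h*A ≤ h*A*(Real.exp (B*(k*h)) * Real.exp (B*h)) :=
        le_mul_of_one_le_right (by positivity) hee
      have expand : (‖x₀‖ + A * (((k:ℝ)+1)*h)) * (Real.exp (B*(k*h)) * Real.exp (B*h))
          = Real.exp (B*h) * ((‖x₀‖ + A * ((k:ℝ)*h)) * Real.exp (B*(k*h)))
            + (h*A)*(Real.exp (B*(k*h)) * Real.exp (B*h)) := by ring
      push_cast
      push_cast at expand ⊢
      linarith [t1, t2, expand.ge, expand.le]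
    calc ‖P (k+1)‖ ≤ (1 + h*B) * ‖P k‖ + h * A := h2
      _ ≤ (1 + h*B) * ((‖x₀‖ + A * (k*h)) * Real.exp (B*(k*h))) + h * A := by
          have : 0 ≤ 1 + h*B := by nlinarith
          nlinarith [ih]
      _ ≤ _ := key


variable {n : ℕ} {h : ℝ} {N : ℕ} {x₀ : EuclideanSpace ℝ (Fin n)}

noncomputable def stepIdx (h : ℝ) (N : ℕ) (t : ℝ) : ℕ := min ⌊t/h⌋₊ N

lemma stepIdx_mono (hh : 0 < h) : Monotone (stepIdx h N) := by
  intro a b hab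
  exact min_le_min (Nat.floor_mono (by exact div_le_div_of_nonneg_right hab hh.le)) le_rfl

lemma stepIdx_le (t : ℝ) : stepIdx h N t ≤ N := min_le_right _ _

lemma stepIdx_measurable (hh : 0 < h) : Measurable (stepIdx h N) :=
  (stepIdx_mono hh).measurable

lemma stepIdx_eq (hh : 0 < h) {k : ℕ} (hk : k ≤ N) {s : ℝ}
    (h1 : k * h ≤ s) (h2 : s < (k+1) * h) : stepIdx h N s = k := by
  have h0 : (0:ℝ) ≤ s := le_trans (by positivity) h1
  have : ⌊s/h⌋₊ = k := by
    rw [Nat.floor_eq_iff (by positivity)]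
    constructor
    · rw [le_div_iff₀ hh]; linarith
    · rw [div_lt_iff₀ hh]; push_cast; linarith
  simp [stepIdx, this, hk]

noncomputable def stepV (V : ℕ → EuclideanSpace ℝ (Fin n)) (h : ℝ) (N : ℕ) (t : ℝ) :
    EuclideanSpace ℝ (Fin n) := V (stepIdx h N t)

lemma stepV_measurable (V : ℕ → EuclideanSpace ℝ (Fin n)) (hh : 0 < h) :
    Measurable (stepV V h N) :=
  measurable_from_top.comp (stepIdx_measurable hh)

lemma stepV_norm_le (V : ℕ → EuclideanSpace ℝ (Fin n)) {M : ℝ}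
    (hM : ∀ k ≤ N, ‖V k‖ ≤ M) (t : ℝ) : ‖stepV V h N t‖ ≤ M :=
  hM _ (stepIdx_le t)

lemma stepV_integrable (V : ℕ → EuclideanSpace ℝ (Fin n)) (hh : 0 < h) {M : ℝ}
    (hM : ∀ k ≤ N, ‖V k‖ ≤ M) (a b : ℝ) :
    IntervalIntegrable (stepV V h N) volume a b := by
  constructor <;>
  · refine Integrable.mono' (integrable_const M)
      ((stepV_measurable V hh (N := N)).aestronglyMeasurable.restrict) ?_
    exact Eventually.of_forall fun t => stepV_norm_le V hM t

noncomputable def polyg (x₀ : EuclideanSpace ℝ (Fin n)) (V : ℕ → EuclideanSpace ℝ (Fin n))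
    (h : ℝ) (N : ℕ) (t : ℝ) : EuclideanSpace ℝ (Fin n) :=
  x₀ + ∫ s in (0:ℝ)..t, stepV V h N s

lemma polyg_sub (V : ℕ → EuclideanSpace ℝ (Fin n)) (hh : 0 < h) {M : ℝ}
    (hM : ∀ k ≤ N, ‖V k‖ ≤ M) (s t : ℝ) :
    polyg x₀ V h N t - polyg x₀ V h N s = ∫ u in s..t, stepV V h N u := by
  have h1 := stepV_integrable V hh hM (0:ℝ) s (n := n)
  have h2 := stepV_integrable V hh hM s t (n := n)
  have := integral_add_adjacent_intervals h1 h2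
  simp only [polyg]
  rw [← this]; abel

lemma polyg_lip (V : ℕ → EuclideanSpace ℝ (Fin n)) (hh : 0 < h) {M : ℝ}
    (hM : ∀ k ≤ N, ‖V k‖ ≤ M) (s t : ℝ) :
    ‖polyg x₀ V h N t - polyg x₀ V h N s‖ ≤ M * |t - s| := by
  rw [polyg_sub V hh hM]
  exact intervalIntegral.norm_integral_le_of_norm_le_const
    (fun u _ => stepV_norm_le V hM u)

lemma polyg_grid (V : ℕ → EuclideanSpace ℝ (Fin n)) (hh : 0 < h) {M : ℝ}
    (hM : ∀ k ≤ N, ‖V k‖ ≤ M) (P : ℕ → EuclideanSpace ℝ (Fin n))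
    (hP0 : P 0 = x₀) (hPs : ∀ k, P (k+1) = P k + h • V k) :
    ∀ k, k ≤ N → polyg x₀ V h N (k * h) = P k := by
  intro k
  induction k with
  | zero => intro _; simp [polyg, hP0]
  | succ k ih =>
    intro hk
    have hkN : k ≤ N := Nat.le_of_succ_le hk
    have key : (∫ u in (k*h : ℝ)..((k+1:ℕ)*h : ℝ), stepV V h N u) = h • V k := by
      have hae : ∀ᵐ u ∂volume, u ∈ Set.uIoc (k*h : ℝ) ((k+1:ℕ)*h : ℝ) → stepV V h N u = V k := by
        have hne : ∀ᵐ (u:ℝ) ∂volume, u ∉ ({((k+1:ℕ)*h : ℝ)} : Set ℝ) := by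
          rw [← measure_eq_zero_iff_ae_notMem]
          exact measure_singleton _
        filter_upwards [hne] with u hu hmem
        have hle : (k*h : ℝ) ≤ ((k+1:ℕ)*h : ℝ) := by
          push_cast; nlinarith
        rw [uIoc_of_le hle] at hmem
        have hu2 : u < ((k+1:ℕ)*h : ℝ) := lt_of_le_of_ne hmem.2 (by simpa using hu)
        have := stepIdx_eq hh hkN (le_of_lt hmem.1) (by push_cast at hu2 ⊢; linarith)
        simp [stepV, this]
      rw [intervalIntegral.integral_congr_ae hae, intervalIntegral.integral_const]
      push_cast
      congr 1
      ring
    have := polyg_sub (x₀ := x₀) V hh hM (k*h : ℝ) ((k+1:ℕ)*h : ℝ)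
    rw [key] at this
    have := eq_add_of_sub_eq this
    rw [this, ih hkN, hPs]
    abel



lemma intervalIntegrable_of_bounded {g : ℝ → EuclideanSpace ℝ (Fin n)} (hmeas : Measurable g)
    {M : ℝ} (hb : ∀ t, ‖g t‖ ≤ M) (a b : ℝ) : IntervalIntegrable g volume a b := by
  constructor <;>
  · refine Integrable.mono' (integrable_const M) (hmeas.aestronglyMeasurable.restrict) ?_
    exact Eventually.of_forall fun t => hb t

lemma stepIdx_grid_close {h : ℝ} (hh : 0 < h) {N : ℕ} {t T : ℝ} (ht0 : 0 ≤ t) (htT : t ≤ T)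
    (hNT : ((N:ℝ)+1) * h = T) :
    (stepIdx h N t : ℝ) * h ≤ t ∧ t - (stepIdx h N t : ℝ) * h ≤ h := by
  by_cases hc : ⌊t/h⌋₊ ≤ N
  · have hidx : stepIdx h N t = ⌊t/h⌋₊ := min_eq_left hc
    rw [hidx]
    constructor
    · have h1 : (⌊t/h⌋₊ : ℝ) ≤ t/h := Nat.floor_le (by positivity)
      calc (⌊t/h⌋₊ : ℝ) * h ≤ (t/h) * h := by nlinarith
        _ = t := by field_simp
    · have h2 : t/h < (⌊t/h⌋₊ : ℝ) + 1 := Nat.lt_floor_add_one _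
      have : t < ((⌊t/h⌋₊ : ℝ) + 1) * h := by
        calc t = (t/h) * h := by field_simp
          _ < ((⌊t/h⌋₊ : ℝ) + 1) * h := by nlinarith
      linarith [this]
  · push_neg at hc
    have hidx : stepIdx h N t = N := min_eq_right (le_of_lt hc)
    rw [hidx]
    have h1 : (N:ℝ) + 1 ≤ (⌊t/h⌋₊ : ℝ) := by exact_mod_cast hc
    have h2 : (⌊t/h⌋₊ : ℝ) ≤ t/h := Nat.floor_le (by positivity)
    have h3 : ((N:ℝ)+1) * h ≤ t := by
      calc ((N:ℝ)+1) * h ≤ (⌊t/h⌋₊ : ℝ) * h := by nlinarith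
        _ ≤ (t/h) * h := by nlinarith
        _ = t := by field_simp
    constructor <;> nlinarith



noncomputable def hellyG (L : ℚ → ℝ) (t : ℝ) : ℝ :=
  sSup (L '' {q : ℚ | (q:ℝ) < t})

lemma hellyG_set_nonempty (L : ℚ → ℝ) (t : ℝ) : (L '' {q : ℚ | (q:ℝ) < t}).Nonempty := by
  obtain ⟨q, hq⟩ := exists_rat_lt t
  exact ⟨L q, ⟨q, hq, rfl⟩⟩

lemma hellyG_bddAbove {L : ℚ → ℝ} {M : ℝ} (hbdd : ∀ q, L q ≤ M) (t : ℝ) :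
    BddAbove (L '' {q : ℚ | (q:ℝ) < t}) := by
  refine ⟨M, ?_⟩
  rintro _ ⟨q, _, rfl⟩
  exact hbdd q

lemma hellyG_mono {L : ℚ → ℝ} {M : ℝ} (hbdd : ∀ q, L q ≤ M) : Monotone (hellyG L) := by
  intro s t hst
  exact csSup_le_csSup (hellyG_bddAbove hbdd t) (hellyG_set_nonempty L s)
    (Set.image_mono (fun q hq => lt_of_lt_of_le hq hst))

lemma hellyG_nonneg {L : ℚ → ℝ} (h0 : ∀ q, 0 ≤ L q) {M : ℝ} (hbdd : ∀ q, L q ≤ M) (t : ℝ) :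
    0 ≤ hellyG L t := by
  obtain ⟨q, hq⟩ := exists_rat_lt t
  exact le_trans (h0 q) (le_csSup (hellyG_bddAbove hbdd t) ⟨q, hq, rfl⟩)

lemma hellyG_le {L : ℚ → ℝ} {M : ℝ} (hbdd : ∀ q, L q ≤ M) (t : ℝ) : hellyG L t ≤ M :=
  csSup_le (hellyG_set_nonempty L t) (by rintro _ ⟨q, _, rfl⟩; exact hbdd q)

lemma rat_le_hellyG {L : ℚ → ℝ} {M : ℝ} (hbdd : ∀ q, L q ≤ M) {q : ℚ} {t : ℝ}
    (hq : (q:ℝ) < t) : L q ≤ hellyG L t :=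
  le_csSup (hellyG_bddAbove hbdd t) ⟨q, hq, rfl⟩

lemma helly_tendsto (W : ℕ → ℝ → ℝ) (hmono : ∀ m, Monotone (W m)) (M : ℝ)
    (L : ℚ → ℝ) (hL : ∀ q : ℚ, Tendsto (fun m => W m (q:ℝ)) atTop (𝓝 (L q)))
    (hbdd : ∀ q, L q ≤ M)
    {t : ℝ} (hc : ContinuousAt (hellyG L) t) :
    Tendsto (fun m => W m t) atTop (𝓝 (hellyG L t)) := by
  have hLmono : ∀ q q' : ℚ, q ≤ q' → L q ≤ L q' := by
    intro q q' hqq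
    exact le_of_tendsto_of_tendsto' (hL q) (hL q') (fun m => hmono m (by exact_mod_cast hqq))
  rw [Metric.tendsto_atTop]
  intro δ hδ
  -- lower rational
  have h1 : hellyG L t - δ/4 < hellyG L t := by linarith
  obtain ⟨x, ⟨q, hqt, rfl⟩, hq⟩ := exists_lt_of_lt_csSup (hellyG_set_nonempty L t) h1
  -- upper rational
  have h2 : ∀ᶠ s in 𝓝 t, hellyG L s < hellyG L t + δ/4 := by
    have := hc
    rw [ContinuousAt] at this
    exact this.eventually_lt_const (by linarith)
  have h3 : ∀ᶠ s in 𝓝[>] t, hellyG L s < hellyG L t + δ/4 :=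
    h2.filter_mono nhdsWithin_le_nhds
  obtain ⟨t', ht'⟩ := (h3.and self_mem_nhdsWithin).exists
  obtain ⟨r, hr1, hr2⟩ := exists_rat_btwn ht'.2
  have hLr : L r < hellyG L t + δ/4 := by
    calc L r ≤ hellyG L t' := rat_le_hellyG hbdd hr2
      _ < hellyG L t + δ/4 := ht'.1
  -- convergence at q and r
  obtain ⟨K1, hK1⟩ := (Metric.tendsto_atTop.1 (hL q)) (δ/4) (by linarith)
  obtain ⟨K2, hK2⟩ := (Metric.tendsto_atTop.1 (hL r)) (δ/4) (by linarith)
  refine ⟨max K1 K2, fun m hm => ?_⟩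
  have hq1 := hK1 m (le_trans (le_max_left _ _) hm)
  have hr1' := hK2 m (le_trans (le_max_right _ _) hm)
  rw [Real.dist_eq, abs_sub_lt_iff] at hq1 hr1' ⊢
  have hWq : W m q ≤ W m t := hmono m hqt.le
  have hWr : W m t ≤ W m r := hmono m hr1.le
  constructor
  · -- W m t - G t < δ
    have : W m r < L r + δ/4 := by linarith [hr1'.1]
    linarith
  · -- G t - W m t < δ
    have : L q - δ/4 < W m q := by linarith [hq1.2]
    linarith

variable {n : ℕ}

lemma coord_abs_le_norm (x : EuclideanSpace ℝ (Fin n)) (j : Fin n) : |x j| ≤ ‖x‖ := by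
  rw [EuclideanSpace.norm_eq]
  have h1 : |x j| = Real.sqrt (‖x j‖^2) := by
    rw [Real.sqrt_sq_eq_abs, Real.norm_eq_abs, abs_abs]
  rw [h1]
  apply Real.sqrt_le_sqrt
  exact Finset.single_le_sum (f := fun i => ‖x i‖^2) (fun i _ => by positivity)
    (Finset.mem_univ j)

lemma norm_le_sqrt_mul {M : ℝ} (hM : 0 ≤ M) (x : EuclideanSpace ℝ (Fin n))
    (hb : ∀ j, |x j| ≤ M) : ‖x‖ ≤ Real.sqrt n * M := by
  rw [EuclideanSpace.norm_eq]
  have h1 : ∑ i, ‖x i‖^2 ≤ n * M^2 := by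
    calc ∑ i, ‖x i‖^2 ≤ ∑ _i : Fin n, M^2 := by
          apply Finset.sum_le_sum
          intro i _
          have := hb i
          rw [Real.norm_eq_abs]
          nlinarith [abs_nonneg (x i)]
      _ = n * M^2 := by simp [Finset.sum_const, nsmul_eq_mul]
  calc Real.sqrt (∑ i, ‖x i‖^2) ≤ Real.sqrt (n * M^2) := Real.sqrt_le_sqrt h1
    _ = Real.sqrt n * M := by
        rw [Real.sqrt_mul (by positivity), Real.sqrt_sq hM]

lemma pattern_subseq (V : ℕ → ℕ → EuclideanSpace ℝ (Fin n))
    (hclass : ∀ N j, (Monotone (fun k => V N k j) ∧ ∀ k, 0 ≤ V N k j)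
      ∨ (Antitone (fun k => V N k j) ∧ ∀ k, V N k j ≤ 0)) :
    ∃ φ₁ : ℕ → ℕ, StrictMono φ₁ ∧ ∃ ε : Fin n → ℝ, (∀ j, ε j = 1 ∨ ε j = -1) ∧
      ∀ m j, Monotone (fun k => ε j * V (φ₁ m) k j) ∧ ∀ k, 0 ≤ ε j * V (φ₁ m) k j := by
  classical
  set b : ℕ → Fin n → Bool := fun N j =>
    if (Monotone (fun k => V N k j) ∧ ∀ k, 0 ≤ V N k j) then true else false with hbdef
  obtain ⟨c, hc⟩ := Finite.exists_infinite_fiber b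
  have hcinf : {N | b N = c}.Infinite := by
    rw [← Set.infinite_coe_iff]
    have : {N | b N = c} = b ⁻¹' {c} := by ext N; simp
    rw [this]
    exact hc
  set ε : Fin n → ℝ := fun j => if c j then 1 else -1 with hεdef
  refine ⟨Nat.nth (fun N => b N = c), Nat.nth_strictMono hcinf, ε,
    fun j => by by_cases h : c j <;> simp [hεdef, h], ?_⟩
  intro m j
  have hbm : b (Nat.nth (fun N => b N = c) m) = c := Nat.nth_mem_of_infinite hcinf m
  set N := Nat.nth (fun N => b N = c) m
  have hbj : b N j = c j := by rw [hbm]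
  by_cases hcj : c j
  · have hε1 : ε j = 1 := by simp [hεdef, hcj]
    have hP : Monotone (fun k => V N k j) ∧ ∀ k, 0 ≤ V N k j := by
      by_contra hcon
      have hfalse : b N j = false := by simp only [hbdef]; exact if_neg hcon
      exact Bool.false_ne_true ((hfalse.symm.trans hbj).trans hcj)
    rw [hε1]
    exact ⟨by simpa using hP.1, by simpa using hP.2⟩
  · have hε1 : ε j = -1 := by simp [hεdef, hcj]
    have hnP : ¬(Monotone (fun k => V N k j) ∧ ∀ k, 0 ≤ V N k j) := by
      intro hP
      have htrue : b N j = true := by simp only [hbdef]; exact if_pos hP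
      exact hcj (hbj.symm.trans htrue)
    have hA := (hclass N j).resolve_left hnP
    rw [hε1]
    constructor
    · intro k1 k2 hk
      have := hA.1 hk
      simp only []
      nlinarith
    · intro k
      have := hA.2 k
      simp only []
      nlinarith

variable {n : ℕ}


lemma velocity_limit (M : ℝ) (hM : 0 ≤ M) (ε : Fin n → ℝ) (hε : ∀ j, ε j = 1 ∨ ε j = -1)
    (W : ℕ → ℝ → EuclideanSpace ℝ (Fin n))
    (hWmono : ∀ m j, Monotone (fun t => ε j * W m t j))
    (hW0 : ∀ m t j, 0 ≤ ε j * W m t j)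
    (hWb : ∀ m t, ‖W m t‖ ≤ M) :
    ∃ φ : ℕ → ℕ, StrictMono φ ∧ ∃ g : ℝ → EuclideanSpace ℝ (Fin n), ∃ D : Set ℝ,
      Measurable g ∧ (∀ t j, 0 ≤ ε j * g t j) ∧ (∀ t j, |g t j| ≤ M) ∧
      D.Countable ∧ (∀ t ∉ D, ContinuousAt g t) ∧
      (∀ t ∉ D, Tendsto (fun m => W (φ m) t) atTop (𝓝 (g t))) := by
  classical
  have hε2 : ∀ j, ε j * ε j = 1 := by
    intro j; rcases hε j with h | h <;> simp [h]
  have hεabs : ∀ (j : Fin n) (y : ℝ), |ε j * y| = |y| := by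
    intro j y; rcases hε j with h | h <;> simp [h, abs_mul]
  set eqQ : ℕ ≃ ℚ := (Denumerable.eqv ℚ).symm with heqQ
  have hcpt : IsCompact (Set.univ.pi fun _ : ℕ =>
      Metric.closedBall (0 : EuclideanSpace ℝ (Fin n)) M) :=
    isCompact_univ_pi fun _ => isCompact_closedBall _ _
  have hu : ∀ m, (fun i => W m (eqQ i)) ∈ (Set.univ.pi fun _ : ℕ =>
      Metric.closedBall (0 : EuclideanSpace ℝ (Fin n)) M) := by
    intro m
    rw [Set.mem_univ_pi]
    intro i
    rw [mem_closedBall_zero_iff]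
    exact hWb m _
  obtain ⟨l, hl, φ, hφ, hconv⟩ := hcpt.tendsto_subseq hu
  have hlb : ∀ i, ‖l i‖ ≤ M := by
    intro i
    rw [Set.mem_univ_pi] at hl
    have := hl i
    rwa [mem_closedBall_zero_iff] at this
  have hconv' : ∀ q : ℚ, Tendsto (fun m => W (φ m) (q:ℝ)) atTop (𝓝 (l (eqQ.symm q))) := by
    intro q
    have h1 := tendsto_pi_nhds.1 hconv (eqQ.symm q)
    simp only [Function.comp] at h1
    simpa using h1
  have hproj : ∀ j : Fin n, Continuous (fun y : EuclideanSpace ℝ (Fin n) => y j) := by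
    intro j
    exact (EuclideanSpace.proj (𝕜 := ℝ) j).continuous
  set Lc : Fin n → ℚ → ℝ := fun j q => ε j * l (eqQ.symm q) j with hLcdef
  have hWcConv : ∀ (j : Fin n) (q : ℚ),
      Tendsto (fun m => ε j * W (φ m) (q:ℝ) j) atTop (𝓝 (Lc j q)) := by
    intro j q
    exact (((continuous_const.mul (hproj j)).tendsto _).comp (hconv' q))
  have hLcb : ∀ j q, Lc j q ≤ M := by
    intro j q
    calc Lc j q ≤ |Lc j q| := le_abs_self _
      _ = |l (eqQ.symm q) j| := hεabs j _
      _ ≤ ‖l (eqQ.symm q)‖ := coord_abs_le_norm _ _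
      _ ≤ M := hlb _
  have hLc0 : ∀ j q, 0 ≤ Lc j q := by
    intro j q
    exact ge_of_tendsto' (hWcConv j q) (fun m => hW0 (φ m) (q:ℝ) j)
  set G : Fin n → ℝ → ℝ := fun j => hellyG (Lc j) with hGdef
  have hGmono : ∀ j, Monotone (G j) := fun j => hellyG_mono (hLcb j)
  have hG0 : ∀ j t, 0 ≤ G j t := fun j t => hellyG_nonneg (hLc0 j) (hLcb j) t
  have hGM : ∀ j t, G j t ≤ M := fun j t => hellyG_le (hLcb j) t
  set g : ℝ → EuclideanSpace ℝ (Fin n) :=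
    fun t => (EuclideanSpace.equiv (Fin n) ℝ).symm (fun j => ε j * G j t) with hgdef
  have hgapp : ∀ t j, g t j = ε j * G j t := fun t j => rfl
  have hgmeas : Measurable g := by
    apply (Continuous.measurable (EuclideanSpace.equiv (Fin n) ℝ).symm.continuous).comp
    exact measurable_pi_lambda _ fun j => measurable_const.mul (hGmono j).measurable
  have hgpos : ∀ t j, 0 ≤ ε j * g t j := by
    intro t j
    rw [hgapp, ← mul_assoc, hε2, one_mul]
    exact hG0 j t
  have hgb : ∀ t j, |g t j| ≤ M := by
    intro t j
    rw [hgapp, hεabs, abs_of_nonneg (hG0 j t)]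
    exact hGM j t
  set D : Set ℝ := ⋃ j, {s | ¬ContinuousAt (G j) s} with hDdef
  have hDc : D.Countable := countable_iUnion fun j => (hGmono j).countable_not_continuousAt
  have hGcont : ∀ t ∉ D, ∀ j, ContinuousAt (G j) t := by
    intro t ht j
    by_contra hcon
    exact ht (mem_iUnion.2 ⟨j, hcon⟩)
  have hgcont : ∀ t ∉ D, ContinuousAt g t := by
    intro t ht
    apply ((EuclideanSpace.equiv (Fin n) ℝ).symm.continuous.continuousAt).comp
    exact continuousAt_pi.2 fun j => continuousAt_const.mul (hGcont t ht j)
  refine ⟨φ, hφ, g, D, hgmeas, hgpos, hgb, hDc, hgcont, ?_⟩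
  intro t ht
  have hcoord : ∀ j, Tendsto (fun m => W (φ m) t j) atTop (𝓝 (g t j)) := by
    intro j
    have h1 : Tendsto (fun m => ε j * W (φ m) t j) atTop (𝓝 (G j t)) :=
      helly_tendsto (fun m s => ε j * W (φ m) s j) (fun m => hWmono (φ m) j) M (Lc j)
        (hWcConv j) (hLcb j) (hGcont t ht j)
    have h2 := h1.const_mul (ε j)
    have heq : (fun m => ε j * (ε j * W (φ m) t j)) = fun m => W (φ m) t j :=
      funext fun m => by rw [← mul_assoc, hε2, one_mul]
    rw [heq] at h2
    rw [hgapp]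
    exact h2
  have hpi : Tendsto (fun m => (fun j => W (φ m) t j)) atTop (𝓝 (fun j => g t j)) :=
    tendsto_pi_nhds.2 hcoord
  have h3 := ((EuclideanSpace.equiv (Fin n) ℝ).symm.continuous.tendsto _).comp hpi
  have hid : ∀ y : EuclideanSpace ℝ (Fin n),
      (EuclideanSpace.equiv (Fin n) ℝ).symm (fun j => y j) = y := fun y => rfl
  simp only [Function.comp, hid] at h3
  exact h3

end WCMaux
open MeasureTheory in
theorem existence_wcm_nonconvex
    (n : ℕ) (F : EuclideanSpace ℝ (Fin n) → Set (EuclideanSpace ℝ (Fin n)))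
    (hne : ∀ x, (F x).Nonempty) (hcpt : ∀ x, IsCompact (F x))
    (hgraph : IsClosed {p : EuclideanSpace ℝ (Fin n) × EuclideanSpace ℝ (Fin n) | p.2 ∈ F p.1})
    (A B : ℝ) (hgrowth : ∀ x, ∀ v ∈ F x, ‖v‖ ≤ A + B * ‖x‖)
    (x₀ : EuclideanSpace ℝ (Fin n)) (T : ℝ) (hT : 0 < T)
    (hWCM : ∀ x y, ∀ v ∈ F x, ∃ w ∈ F y, ∀ j : Fin n, 0 ≤ (x j - y j) * (v j - w j)) :
    ∃ (K : NNReal) (x : ℝ → EuclideanSpace ℝ (Fin n))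
      (x' : ℝ → EuclideanSpace ℝ (Fin n)),
      LipschitzOnWith K x (Set.Icc 0 T) ∧ x 0 = x₀ ∧
      (∀ᵐ t ∂(volume.restrict (Set.Icc (0:ℝ) T)),
        HasDerivAt x (x' t) t ∧ x' t ∈ F (x t)) ∧
      (∀ j : Fin n, MonotoneOn (fun t => x t j) (Set.Icc 0 T) ∨
        AntitoneOn (fun t => x t j) (Set.Icc 0 T)) := by
  classical
  open Filter Set Topology WCMaux in
  set A' : ℝ := |A| with hA'def
  set B' : ℝ := |B| with hB'def
  have hA0 : 0 ≤ A' := abs_nonneg A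
  have hB0 : 0 ≤ B' := abs_nonneg B
  have hgrowth' : ∀ x, ∀ v ∈ F x, ‖v‖ ≤ A' + B' * ‖x‖ := by
    intro x v hv
    calc ‖v‖ ≤ A + B * ‖x‖ := hgrowth x v hv
      _ ≤ A' + B' * ‖x‖ := add_le_add (le_abs_self A)
          (mul_le_mul_of_nonneg_right (le_abs_self B) (norm_nonneg x))
  set h : ℕ → ℝ := fun N => T / ((N:ℝ)+1) with hhdef
  have hh : ∀ N, 0 < h N := fun N => div_pos hT (by positivity)
  have hhT : ∀ N : ℕ, ((N:ℝ)+1) * h N = T := by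
    intro N
    rw [hhdef]
    field_simp
  set P : ℕ → ℕ → EuclideanSpace ℝ (Fin n) := fun N => eP F hne hWCM x₀ (h N) with hPdef
  set V : ℕ → ℕ → EuclideanSpace ℝ (Fin n) := fun N => eV F hne hWCM x₀ (h N) with hVdef
  have hP0 : ∀ N, P N 0 = x₀ := fun N => rfl
  have hPs : ∀ N k, P N (k+1) = P N k + h N • V N k := fun N k => rfl
  have hVmem : ∀ N k, V N k ∈ F (P N k) := fun N k => eV_mem k
  have hVsq : ∀ N k (j : Fin n), V N k j * V N k j ≤ V N k j * V N (k+1) j :=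
    fun N k j => eV_sq (hh N) k j
  set C : ℝ := (‖x₀‖ + A' * T) * Real.exp (B' * T) with hCdef
  have hC0 : 0 ≤ C := by positivity
  set M : ℝ := A' + B' * C with hMdef
  have hM0 : 0 ≤ M := by positivity
  have hPb : ∀ (N : ℕ) (k : ℕ), (k:ℝ) * h N ≤ T → ‖P N k‖ ≤ C := by
    intro N k hk
    have hgen := growth_bound hA0 hB0 (hh N).le (P N) (V N) (hP0 N) (hPs N)
      (fun k => hgrowth' _ _ (hVmem N k)) k
    have h1 : 0 ≤ (k:ℝ) * h N := by positivity
    have h2 := Real.exp_le_exp.2 (mul_le_mul_of_nonneg_left hk hB0)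
    have h3 : 0 < Real.exp (B' * ((k:ℝ) * h N)) := Real.exp_pos _
    have h4 := mul_le_mul_of_nonneg_left hk hA0
    calc ‖P N k‖ ≤ (‖x₀‖ + A' * ((k:ℝ) * h N)) * Real.exp (B' * ((k:ℝ) * h N)) := hgen
      _ ≤ (‖x₀‖ + A' * T) * Real.exp (B' * ((k:ℝ) * h N)) := by
        apply mul_le_mul_of_nonneg_right _ h3.le
        linarith [h4]
      _ ≤ C := by
        rw [hCdef]
        apply mul_le_mul_of_nonneg_left h2
        have := norm_nonneg x₀
        nlinarith
  have hVb : ∀ N, ∀ k ≤ N, ‖V N k‖ ≤ M := by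
    intro N k hk
    have h1 : (k:ℝ) * h N ≤ T := by
      rw [← hhT N]
      have : (k:ℝ) ≤ (N:ℝ) + 1 := by
        have : (k:ℝ) ≤ (N:ℝ) := by exact_mod_cast hk
        linarith
      nlinarith [(hh N).le]
    calc ‖V N k‖ ≤ A' + B' * ‖P N k‖ := hgrowth' _ _ (hVmem N k)
      _ ≤ M := by rw [hMdef]; nlinarith [hPb N k h1]
  have hclass : ∀ N j, (Monotone (fun k => V N k j) ∧ ∀ k, 0 ≤ V N k j)
      ∨ (Antitone (fun k => V N k j) ∧ ∀ k, V N k j ≤ 0) :=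
    fun N j => signseq (fun k => hVsq N k j)
  obtain ⟨φ₁, hφ₁, ε, hε, hclass'⟩ := pattern_subseq V hclass
  set Wfun : ℕ → ℝ → EuclideanSpace ℝ (Fin n) :=
    fun m => stepV (V (φ₁ m)) (h (φ₁ m)) (φ₁ m) with hWdef
  have hWmono : ∀ m j, Monotone (fun t => ε j * Wfun m t j) := by
    intro m j
    exact ((hclass' m j).1).comp (stepIdx_mono (hh (φ₁ m)))
  have hW0 : ∀ m t j, 0 ≤ ε j * Wfun m t j := fun m t j => (hclass' m j).2 _
  have hWb : ∀ m t, ‖Wfun m t‖ ≤ M := fun m t => stepV_norm_le _ (hVb (φ₁ m)) t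
  obtain ⟨φ₂, hφ₂, g, D, hgmeas, hgpos, hgb, hDc, hgcont, hgtend⟩ :=
    velocity_limit M hM0 ε hε Wfun hWmono hW0 hWb
  set φ : ℕ → ℕ := φ₁ ∘ φ₂ with hφdef
  have hφmono : StrictMono φ := hφ₁.comp hφ₂
  set Mg : ℝ := Real.sqrt n * M with hMgdef
  have hMg0 : 0 ≤ Mg := by positivity
  have hgnorm : ∀ t, ‖g t‖ ≤ Mg := fun t => norm_le_sqrt_mul hM0 (g t) (hgb t)
  have hgint : ∀ a b : ℝ, IntervalIntegrable g volume a b :=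
    fun a b => intervalIntegrable_of_bounded hgmeas hgnorm a b
  set x : ℝ → EuclideanSpace ℝ (Fin n) := fun t => x₀ + ∫ s in (0:ℝ)..t, g s with hxdef
  have hxsub : ∀ s t : ℝ, x t - x s = ∫ u in s..t, g u := by
    intro s t
    have h1 := intervalIntegral.integral_add_adjacent_intervals (hgint 0 s) (hgint s t)
    rw [hxdef]
    simp only
    rw [← h1]
    abel
  have hxlip : LipschitzOnWith (Real.toNNReal Mg) x (Icc 0 T) := by
    apply LipschitzOnWith.of_dist_le_mul
    intro s _ t _
    rw [dist_eq_norm, hxsub t s]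
    calc ‖∫ u in t..s, g u‖ ≤ Mg * |s - t| :=
        intervalIntegral.norm_integral_le_of_norm_le_const (fun u _ => hgnorm u)
      _ = ↑(Real.toNNReal Mg) * dist s t := by
        rw [Real.coe_toNNReal _ hMg0, Real.dist_eq]
  set X : ℕ → ℝ → EuclideanSpace ℝ (Fin n) :=
    fun m => polyg x₀ (V (φ m)) (h (φ m)) (φ m) with hXdef
  have hD0 : volume D = 0 := hDc.measure_zero _
  have hXconv : ∀ t, t ∈ Icc (0:ℝ) T → Tendsto (fun m => X m t) atTop (𝓝 (x t)) := by
    intro t ht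
    rw [hxdef, hXdef]
    simp only [polyg]
    apply Tendsto.const_add
    apply intervalIntegral.tendsto_integral_filter_of_dominated_convergence (bound := fun _ => M)
    · exact Eventually.of_forall
        (fun m => ((stepV_measurable _ (hh (φ m))).aestronglyMeasurable).restrict)
    · exact Eventually.of_forall (fun m => Eventually.of_forall
        (fun s _ => stepV_norm_le _ (hVb (φ m)) s))
    · exact intervalIntegrable_const
    · have h1 : ∀ᵐ s : ℝ ∂volume, s ∉ D := measure_eq_zero_iff_ae_notMem.1 hD0
      filter_upwards [h1] with s hs _
      exact hgtend s hs
  have hgood : ∀ t, t ∈ Icc (0:ℝ) T → t ∉ D → HasDerivAt x (g t) t ∧ g t ∈ F (x t) := by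
    intro t ht htD
    constructor
    · have hmeasat : StronglyMeasurableAtFilter g (𝓝 t) volume :=
        ⟨Set.univ, Filter.univ_mem, (hgmeas.aestronglyMeasurable).restrict⟩
      have hder := intervalIntegral.integral_hasDerivAt_right (hgint 0 t) hmeasat (hgcont t htD)
      exact hder.const_add x₀
    · set k : ℕ → ℕ := fun m => stepIdx (h (φ m)) (φ m) t with hkdef
      have hgrid : ∀ m, X m ((k m : ℝ) * h (φ m)) = P (φ m) (k m) := fun m =>
        polyg_grid _ (hh (φ m)) (hVb (φ m)) _ (hP0 (φ m)) (hPs (φ m)) (k m) (stepIdx_le t)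
      have hclose : ∀ m, |(k m : ℝ) * h (φ m) - t| ≤ h (φ m) := by
        intro m
        obtain ⟨c1, c2⟩ := stepIdx_grid_close (hh (φ m)) ht.1 ht.2 (hhT (φ m))
        rw [abs_le]
        constructor <;> [linarith; linarith]
      have hh0 : Tendsto (fun m : ℕ => h (φ m)) atTop (𝓝 0) := by
        have h1 : Tendsto (fun m : ℕ => ((φ m : ℝ) + 1)) atTop atTop :=
          tendsto_atTop_add_const_right _ 1
            (tendsto_natCast_atTop_atTop.comp hφmono.tendsto_atTop)
        simpa [hhdef] using h1.const_div_atTop T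
      have hXt := hXconv t ht
      have hb2 : ∀ m, dist (X m ((k m : ℝ) * h (φ m))) (x t)
          ≤ M * h (φ m) + dist (X m t) (x t) := by
        intro m
        calc dist (X m ((k m : ℝ) * h (φ m))) (x t)
            ≤ dist (X m ((k m : ℝ) * h (φ m))) (X m t) + dist (X m t) (x t) :=
              dist_triangle _ _ _
          _ ≤ M * h (φ m) + dist (X m t) (x t) := by
              apply add_le_add_left
              rw [dist_eq_norm]
              calc ‖X m ((k m : ℝ) * h (φ m)) - X m t‖
                  ≤ M * |(k m : ℝ) * h (φ m) - t| := polyg_lip _ (hh (φ m)) (hVb (φ m)) _ _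
                _ ≤ M * h (φ m) := mul_le_mul_of_nonneg_left (hclose m) hM0
      have hXgrid : Tendsto (fun m => X m ((k m : ℝ) * h (φ m))) atTop (𝓝 (x t)) := by
        rw [tendsto_iff_dist_tendsto_zero]
        apply squeeze_zero (fun m => dist_nonneg) hb2
        have h2 : Tendsto (fun m : ℕ => M * h (φ m)) atTop (𝓝 0) := by
          simpa using hh0.const_mul M
        have h3 : Tendsto (fun m : ℕ => dist (X m t) (x t)) atTop (𝓝 0) :=
          tendsto_iff_dist_tendsto_zero.1 hXt
        simpa using h2.add h3
      have hVt : Tendsto (fun m => Wfun (φ₂ m) t) atTop (𝓝 (g t)) := hgtend t htD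
      have hpair : Tendsto (fun m => (X m ((k m : ℝ) * h (φ m)), Wfun (φ₂ m) t)) atTop
          (𝓝 (x t, g t)) := hXgrid.prodMk_nhds hVt
      have hmem : ∀ m, (X m ((k m : ℝ) * h (φ m)), Wfun (φ₂ m) t) ∈
          {p : EuclideanSpace ℝ (Fin n) × EuclideanSpace ℝ (Fin n) | p.2 ∈ F p.1} := by
        intro m
        have : Wfun (φ₂ m) t = V (φ m) (k m) := rfl
        rw [Set.mem_setOf_eq, this, hgrid m]
        exact hVmem (φ m) (k m)
      exact hgraph.mem_of_tendsto hpair (Eventually.of_forall hmem)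
  have hproja : ∀ (a b : ℝ) (j : Fin n), (∫ s in a..b, g s) j = ∫ s in a..b, g s j := by
    intro a b j
    have := (EuclideanSpace.proj (𝕜 := ℝ) j).intervalIntegral_comp_comm (hgint a b)
    exact this.symm
  have hxcoord : ∀ (s t : ℝ) (j : Fin n), x t j - x s j = ∫ u in s..t, g u j := by
    intro s t j
    have h1 := congrArg (fun y : EuclideanSpace ℝ (Fin n) => y j) (hxsub s t)
    simp only at h1
    rw [← hproja s t j]
    rw [← h1]
    rfl
  have hmono : ∀ j : Fin n, MonotoneOn (fun t => x t j) (Icc 0 T) ∨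
      AntitoneOn (fun t => x t j) (Icc 0 T) := by
    intro j
    rcases hε j with hj | hj
    · left
      intro s hs t ht hst
      have h1 : 0 ≤ ∫ u in s..t, g u j := by
        apply intervalIntegral.integral_nonneg hst
        intro u _
        have := hgpos u j
        rwa [hj, one_mul] at this
      have h2 := hxcoord s t j
      simp only
      linarith [h2 ▸ h1]
    · right
      intro s hs t ht hst
      have h1 : 0 ≤ ∫ u in s..t, -(g u j) := by
        apply intervalIntegral.integral_nonneg hst
        intro u _
        have := hgpos u j
        rw [hj] at this
        linarith
      rw [intervalIntegral.integral_neg] at h1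
      have h2 := hxcoord s t j
      simp only
      linarith [h2 ▸ (neg_nonneg.1 h1)]
  refine ⟨Real.toNNReal Mg, x, g, hxlip, ?_, ?_, hmono⟩
  · rw [hxdef]
    simp
  · have h1 : ∀ᵐ t ∂(volume.restrict (Icc (0:ℝ) T)), t ∉ D :=
      ((measure_eq_zero_iff_ae_notMem.1 hD0).filter_mono (ae_mono Measure.restrict_le_self))
    have h2 : ∀ᵐ t ∂(volume.restrict (Icc (0:ℝ) T)), t ∈ Icc (0:ℝ) T :=
      ae_restrict_mem measurableSet_Icc
    filter_upwards [h1, h2] with t htD htI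
    exact hgood t htI htD
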